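/- Let σx = !![0, 1; 1, 0], σy = !![0, −i; i, 0], σz = !![1, 0; 0, −1] be the Pauli matrices and I₂ the 2 × 2 identity. In the 4 × 4 complex matrices define δ₁ = σz ⊗ I₂ + I₂ ⊗ σz, δ₂ = σz ⊗ σz, δ₃ = I₂ ⊗ I₂, δ₄ = σx ⊗ σx − σy ⊗ σy, δ₅ = σx ⊗ σy + σy ⊗ σx, and C' = σx ⊗ σx + σy ⊗ σy. Then: (i) ⁅δ_i, C'⁆ = 0 for each i = 1, …, 5; and (ii) the ℂ-linear span of {δ₁, δ₂, δ₃, δ₄, δ₅} is closed under the commutator, i.e. ⁅δ_i, δ_j⁆ lies in span{δ₁, …, δ₅} for all i, j. -/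

import Mathlib

open Kronecker

private def qsx : Matrix (Fin 2) (Fin 2) ℂ := !![0, 1; 1, 0]
private def qsy : Matrix (Fin 2) (Fin 2) ℂ := !![0, -Complex.I; Complex.I, 0]
private def qsz : Matrix (Fin 2) (Fin 2) ℂ := !![1, 0; 0, -1]
private def qI2 : Matrix (Fin 2) (Fin 2) ℂ := 1

private def qΔ : Fin 5 → Matrix (Fin 2 × Fin 2) (Fin 2 × Fin 2) ℂ :=
  ![qsz ⊗ₖ qI2 + qI2 ⊗ₖ qsz, qsz ⊗ₖ qsz, qI2 ⊗ₖ qI2,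
    qsx ⊗ₖ qsx - qsy ⊗ₖ qsy, qsx ⊗ₖ qsy + qsy ⊗ₖ qsx]

private def qC : Matrix (Fin 2 × Fin 2) (Fin 2 × Fin 2) ℂ := qsx ⊗ₖ qsx + qsy ⊗ₖ qsy


set_option maxHeartbeats 1000000 in
private lemma qc0 : ⁅qΔ 0, qC⁆ = 0 := by
  ext ⟨a, b⟩ ⟨c, d⟩
  fin_cases a <;> fin_cases b <;> fin_cases c <;> fin_cases d <;>
    simp [qΔ, qC, qsx, qsy, qsz, qI2, Ring.lie_def, Matrix.mul_apply,
      Fintype.sum_prod_type, Fin.sum_univ_two, Matrix.one_apply,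
      Matrix.smul_apply, smul_eq_mul, Complex.ext_iff] <;> norm_num


set_option maxHeartbeats 1000000 in
private lemma qc1 : ⁅qΔ 1, qC⁆ = 0 := by
  ext ⟨a, b⟩ ⟨c, d⟩
  fin_cases a <;> fin_cases b <;> fin_cases c <;> fin_cases d <;>
    simp [qΔ, qC, qsx, qsy, qsz, qI2, Ring.lie_def, Matrix.mul_apply,
      Fintype.sum_prod_type, Fin.sum_univ_two, Matrix.one_apply,
      Matrix.smul_apply, smul_eq_mul, Complex.ext_iff] <;> norm_num


set_option maxHeartbeats 1000000 in
private lemma qc2 : ⁅qΔ 2, qC⁆ = 0 := by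
  ext ⟨a, b⟩ ⟨c, d⟩
  fin_cases a <;> fin_cases b <;> fin_cases c <;> fin_cases d <;>
    simp [qΔ, qC, qsx, qsy, qsz, qI2, Ring.lie_def, Matrix.mul_apply,
      Fintype.sum_prod_type, Fin.sum_univ_two, Matrix.one_apply,
      Matrix.smul_apply, smul_eq_mul, Complex.ext_iff] <;> norm_num


set_option maxHeartbeats 1000000 in
private lemma qc3 : ⁅qΔ 3, qC⁆ = 0 := by
  ext ⟨a, b⟩ ⟨c, d⟩
  fin_cases a <;> fin_cases b <;> fin_cases c <;> fin_cases d <;>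
    simp [qΔ, qC, qsx, qsy, qsz, qI2, Ring.lie_def, Matrix.mul_apply,
      Fintype.sum_prod_type, Fin.sum_univ_two, Matrix.one_apply,
      Matrix.smul_apply, smul_eq_mul, Complex.ext_iff] <;> norm_num


set_option maxHeartbeats 1000000 in
private lemma qc4 : ⁅qΔ 4, qC⁆ = 0 := by
  ext ⟨a, b⟩ ⟨c, d⟩
  fin_cases a <;> fin_cases b <;> fin_cases c <;> fin_cases d <;>
    simp [qΔ, qC, qsx, qsy, qsz, qI2, Ring.lie_def, Matrix.mul_apply,
      Fintype.sum_prod_type, Fin.sum_univ_two, Matrix.one_apply,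
      Matrix.smul_apply, smul_eq_mul, Complex.ext_iff] <;> norm_num


set_option maxHeartbeats 1000000 in
private lemma qz01 : ⁅qΔ 0, qΔ 1⁆ = 0 := by
  ext ⟨a, b⟩ ⟨c, d⟩
  fin_cases a <;> fin_cases b <;> fin_cases c <;> fin_cases d <;>
    simp [qΔ, qC, qsx, qsy, qsz, qI2, Ring.lie_def, Matrix.mul_apply,
      Fintype.sum_prod_type, Fin.sum_univ_two, Matrix.one_apply,
      Matrix.smul_apply, smul_eq_mul, Complex.ext_iff] <;> norm_num


set_option maxHeartbeats 1000000 in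
private lemma qz02 : ⁅qΔ 0, qΔ 2⁆ = 0 := by
  ext ⟨a, b⟩ ⟨c, d⟩
  fin_cases a <;> fin_cases b <;> fin_cases c <;> fin_cases d <;>
    simp [qΔ, qC, qsx, qsy, qsz, qI2, Ring.lie_def, Matrix.mul_apply,
      Fintype.sum_prod_type, Fin.sum_univ_two, Matrix.one_apply,
      Matrix.smul_apply, smul_eq_mul, Complex.ext_iff] <;> norm_num


set_option maxHeartbeats 1000000 in
private lemma qz12 : ⁅qΔ 1, qΔ 2⁆ = 0 := by
  ext ⟨a, b⟩ ⟨c, d⟩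
  fin_cases a <;> fin_cases b <;> fin_cases c <;> fin_cases d <;>
    simp [qΔ, qC, qsx, qsy, qsz, qI2, Ring.lie_def, Matrix.mul_apply,
      Fintype.sum_prod_type, Fin.sum_univ_two, Matrix.one_apply,
      Matrix.smul_apply, smul_eq_mul, Complex.ext_iff] <;> norm_num


set_option maxHeartbeats 1000000 in
private lemma qz13 : ⁅qΔ 1, qΔ 3⁆ = 0 := by
  ext ⟨a, b⟩ ⟨c, d⟩
  fin_cases a <;> fin_cases b <;> fin_cases c <;> fin_cases d <;>
    simp [qΔ, qC, qsx, qsy, qsz, qI2, Ring.lie_def, Matrix.mul_apply,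
      Fintype.sum_prod_type, Fin.sum_univ_two, Matrix.one_apply,
      Matrix.smul_apply, smul_eq_mul, Complex.ext_iff] <;> norm_num


set_option maxHeartbeats 1000000 in
private lemma qz14 : ⁅qΔ 1, qΔ 4⁆ = 0 := by
  ext ⟨a, b⟩ ⟨c, d⟩
  fin_cases a <;> fin_cases b <;> fin_cases c <;> fin_cases d <;>
    simp [qΔ, qC, qsx, qsy, qsz, qI2, Ring.lie_def, Matrix.mul_apply,
      Fintype.sum_prod_type, Fin.sum_univ_two, Matrix.one_apply,
      Matrix.smul_apply, smul_eq_mul, Complex.ext_iff] <;> norm_num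


set_option maxHeartbeats 1000000 in
private lemma qz23 : ⁅qΔ 2, qΔ 3⁆ = 0 := by
  ext ⟨a, b⟩ ⟨c, d⟩
  fin_cases a <;> fin_cases b <;> fin_cases c <;> fin_cases d <;>
    simp [qΔ, qC, qsx, qsy, qsz, qI2, Ring.lie_def, Matrix.mul_apply,
      Fintype.sum_prod_type, Fin.sum_univ_two, Matrix.one_apply,
      Matrix.smul_apply, smul_eq_mul, Complex.ext_iff] <;> norm_num


set_option maxHeartbeats 1000000 in
private lemma qz24 : ⁅qΔ 2, qΔ 4⁆ = 0 := by
  ext ⟨a, b⟩ ⟨c, d⟩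
  fin_cases a <;> fin_cases b <;> fin_cases c <;> fin_cases d <;>
    simp [qΔ, qC, qsx, qsy, qsz, qI2, Ring.lie_def, Matrix.mul_apply,
      Fintype.sum_prod_type, Fin.sum_univ_two, Matrix.one_apply,
      Matrix.smul_apply, smul_eq_mul, Complex.ext_iff] <;> norm_num


set_option maxHeartbeats 1000000 in
private lemma ql03 : ⁅qΔ 0, qΔ 3⁆ = (4 * Complex.I) • qΔ 4 := by
  ext ⟨a, b⟩ ⟨c, d⟩
  fin_cases a <;> fin_cases b <;> fin_cases c <;> fin_cases d <;>
    simp [qΔ, qC, qsx, qsy, qsz, qI2, Ring.lie_def, Matrix.mul_apply,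
      Fintype.sum_prod_type, Fin.sum_univ_two, Matrix.one_apply,
      Matrix.smul_apply, smul_eq_mul, Complex.ext_iff] <;> norm_num


set_option maxHeartbeats 1000000 in
private lemma ql04 : ⁅qΔ 0, qΔ 4⁆ = (-4 * Complex.I) • qΔ 3 := by
  ext ⟨a, b⟩ ⟨c, d⟩
  fin_cases a <;> fin_cases b <;> fin_cases c <;> fin_cases d <;>
    simp [qΔ, qC, qsx, qsy, qsz, qI2, Ring.lie_def, Matrix.mul_apply,
      Fintype.sum_prod_type, Fin.sum_univ_two, Matrix.one_apply,
      Matrix.smul_apply, smul_eq_mul, Complex.ext_iff] <;> norm_num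


set_option maxHeartbeats 1000000 in
private lemma ql34 : ⁅qΔ 3, qΔ 4⁆ = (4 * Complex.I) • qΔ 0 := by
  ext ⟨a, b⟩ ⟨c, d⟩
  fin_cases a <;> fin_cases b <;> fin_cases c <;> fin_cases d <;>
    simp [qΔ, qC, qsx, qsy, qsz, qI2, Ring.lie_def, Matrix.mul_apply,
      Fintype.sum_prod_type, Fin.sum_univ_two, Matrix.one_apply,
      Matrix.smul_apply, smul_eq_mul, Complex.ext_iff] <;> norm_num


private lemma qmem (i j : Fin 5) :
    ⁅qΔ i, qΔ j⁆ ∈ Submodule.span ℂ (Set.range qΔ) := by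
  have mem : ∀ k : Fin 5, qΔ k ∈ Submodule.span ℂ (Set.range qΔ) :=
    fun k => Submodule.subset_span ⟨k, rfl⟩
  have S0 : ∀ (A B : Matrix (Fin 2 × Fin 2) (Fin 2 × Fin 2) ℂ), ⁅A, B⁆ = 0 →
      ⁅B, A⁆ ∈ Submodule.span ℂ (Set.range qΔ) := by
    intro A B h
    have : ⁅B, A⁆ = 0 := by
      rw [← @lie_skew _ LieRing.ofAssociativeRing, h, neg_zero]
    rw [this]; exact Submodule.zero_mem _
  have Sc : ∀ (A B : Matrix (Fin 2 × Fin 2) (Fin 2 × Fin 2) ℂ) (c : ℂ) (k : Fin 5),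
      ⁅A, B⁆ = c • qΔ k → ⁅A, B⁆ ∈ Submodule.span ℂ (Set.range qΔ) := by
    intro A B c k h
    rw [h]; exact Submodule.smul_mem _ _ (mem k)
  have Sc' : ∀ (A B : Matrix (Fin 2 × Fin 2) (Fin 2 × Fin 2) ℂ) (c : ℂ) (k : Fin 5),
      ⁅A, B⁆ = c • qΔ k → ⁅B, A⁆ ∈ Submodule.span ℂ (Set.range qΔ) := by
    intro A B c k h
    have : ⁅B, A⁆ = (-c) • qΔ k := by
      rw [← @lie_skew _ LieRing.ofAssociativeRing, h, neg_smul]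
    rw [this]; exact Submodule.smul_mem _ _ (mem k)
  have Sd : ∀ A : Matrix (Fin 2 × Fin 2) (Fin 2 × Fin 2) ℂ,
      ⁅A, A⁆ ∈ Submodule.span ℂ (Set.range qΔ) := by
    intro A; rw [@lie_self _ LieRing.ofAssociativeRing]; exact Submodule.zero_mem _
  fin_cases i <;> fin_cases j
  · exact Sd _
  · exact (qz01 ▸ Submodule.zero_mem _)
  · exact (qz02 ▸ Submodule.zero_mem _)
  · exact Sc _ _ _ _ ql03
  · exact Sc _ _ _ _ ql04
  · exact S0 _ _ qz01
  · exact Sd _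
  · exact (qz12 ▸ Submodule.zero_mem _)
  · exact (qz13 ▸ Submodule.zero_mem _)
  · exact (qz14 ▸ Submodule.zero_mem _)
  · exact S0 _ _ qz02
  · exact S0 _ _ qz12
  · exact Sd _
  · exact (qz23 ▸ Submodule.zero_mem _)
  · exact (qz24 ▸ Submodule.zero_mem _)
  · exact Sc' _ _ _ _ ql03
  · exact S0 _ _ qz13
  · exact S0 _ _ qz23
  · exact Sd _
  · exact Sc _ _ _ _ ql34
  · exact Sc' _ _ _ _ ql04
  · exact S0 _ _ qz14
  · exact S0 _ _ qz24
  · exact Sc' _ _ _ _ ql34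
  · exact Sd _

/-- The five operators `δ₁, …, δ₅` commute with the coherence operator
`C' = σx ⊗ σx + σy ⊗ σy`, and their ℂ-linear span is closed under the commutator:
they exhibit the invariant distribution `Δ` for the restructured 2-qubit system. -/
theorem invariant_distribution_two_qubit :
    let σx : Matrix (Fin 2) (Fin 2) ℂ := !![0, 1; 1, 0]
    let σy : Matrix (Fin 2) (Fin 2) ℂ := !![0, -Complex.I; Complex.I, 0]
    let σz : Matrix (Fin 2) (Fin 2) ℂ := !![1, 0; 0, -1]
    let I2 : Matrix (Fin 2) (Fin 2) ℂ := 1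
    let δ : Fin 5 → Matrix (Fin 2 × Fin 2) (Fin 2 × Fin 2) ℂ :=
      ![σz ⊗ₖ I2 + I2 ⊗ₖ σz, σz ⊗ₖ σz, I2 ⊗ₖ I2,
        σx ⊗ₖ σx - σy ⊗ₖ σy, σx ⊗ₖ σy + σy ⊗ₖ σx]
    let C' := σx ⊗ₖ σx + σy ⊗ₖ σy
    (∀ i, ⁅δ i, C'⁆ = 0) ∧
      ∀ i j, ⁅δ i, δ j⁆ ∈ Submodule.span ℂ (Set.range δ) := by
  intro σx σy σz I2 δ C'
  have hδ : δ = qΔ := by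
    funext i
    show (![qsz ⊗ₖ qI2 + qI2 ⊗ₖ qsz, qsz ⊗ₖ qsz, qI2 ⊗ₖ qI2,
        qsx ⊗ₖ qsx - qsy ⊗ₖ qsy, qsx ⊗ₖ qsy + qsy ⊗ₖ qsx] : Fin 5 → _) i = qΔ i
    rw [qΔ]
  have hC : C' = qC := rfl
  rw [hδ, hC]
  exact ⟨fun i => match i with
    | 0 => qc0 | 1 => qc1 | 2 => qc2 | 3 => qc3 | 4 => qc4, qmem⟩
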